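/- (Johnson bound) Any (v,k,λ)-packing has at most ⌊v·r/k⌋ blocks, where r = ⌊λ(v−1)/(k−1)⌋. -/
import Mathlib

open Finset

private lemma count_total {v k : ℕ} (M : Multiset (Finset (Fin v)))
    (hb : ∀ b ∈ M, b.card = k) :
    ∑ x : Fin v, M.countP (fun b => x ∈ b) = k * Multiset.card M := by
  induction M using Multiset.induction with
  | empty => simp
  | cons a M ih =>
    have ha : a.card = k := hb a (Multiset.mem_cons_self a M)
    have ih' := ih (fun b hbM => hb b (Multiset.mem_cons_of_mem hbM))
    simp only [Multiset.countP_cons, Finset.sum_add_distrib, ih', Multiset.card_cons]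
    have h2 : ∑ x : Fin v, (if x ∈ a then 1 else 0) = a.card := by
      simp [Finset.sum_ite_mem]
    rw [h2, ha]; ring

private lemma count_pair {v k : ℕ} (x : Fin v) (M : Multiset (Finset (Fin v)))
    (hb : ∀ b ∈ M, b.card = k) :
    ∑ w ∈ Finset.univ.erase x, M.countP (fun b => x ∈ b ∧ w ∈ b)
      = (k - 1) * M.countP (fun b => x ∈ b) := by
  induction M using Multiset.induction with
  | empty => simp
  | cons a M ih =>
    have ha : a.card = k := hb a (Multiset.mem_cons_self a M)
    have ih' := ih (fun b hbM => hb b (Multiset.mem_cons_of_mem hbM))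
    simp only [Multiset.countP_cons, Finset.sum_add_distrib, ih', mul_add]
    congr 1
    by_cases hx : x ∈ a
    · simp only [hx, true_and, if_true, mul_one]
      have h3 : (Finset.univ.erase x) ∩ a = a.erase x := by
        ext w
        simp only [Finset.mem_inter, Finset.mem_erase, Finset.mem_univ, and_true]
      rw [Finset.sum_ite_mem, h3]
      simp [Finset.card_erase_of_mem hx, ha]
    · simp [hx]

theorem stmt_7 (v k l : ℕ) (hl : 0 < l) (hk : 2 ≤ k) (hkv : k ≤ v)
    (𝓑 : Multiset (Finset (Fin v)))
    (hblocks : ∀ b ∈ 𝓑, b.card = k)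
    (hpack : ∀ u w : Fin v, u ≠ w → 𝓑.countP (fun b => u ∈ b ∧ w ∈ b) ≤ l)
    (r : ℤ) (hr : r = ⌊(l * (v - 1) : ℚ) / (k - 1)⌋) :
    (Multiset.card 𝓑 : ℤ) ≤ (⌊(v * r : ℚ) / k⌋ : ℤ) := by
  have hv2 : 2 ≤ v := le_trans hk hkv
  -- step 1: (k-1) * r_x ≤ l * (v-1)
  have step1 : ∀ x : Fin v, (k - 1) * 𝓑.countP (fun b => x ∈ b) ≤ l * (v - 1) := by
    intro x
    rw [← count_pair x 𝓑 hblocks]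
    calc ∑ w ∈ Finset.univ.erase x, 𝓑.countP (fun b => x ∈ b ∧ w ∈ b)
        ≤ ∑ w ∈ Finset.univ.erase x, l := by
          apply Finset.sum_le_sum
          intro w hw
          exact hpack x w (Ne.symm (Finset.mem_erase.mp hw).1)
      _ = l * (v - 1) := by
          rw [Finset.sum_const, Finset.card_erase_of_mem (Finset.mem_univ x)]
          simp [mul_comm]
  -- step 2: r_x ≤ r
  have step2 : ∀ x : Fin v, (𝓑.countP (fun b => x ∈ b) : ℤ) ≤ r := by
    intro x
    rw [hr, Int.le_floor]
    have hk1 : (0 : ℚ) < (k : ℚ) - 1 := by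
      have : (2:ℚ) ≤ (k:ℚ) := by exact_mod_cast hk
      linarith
    rw [le_div_iff₀ hk1]
    have := step1 x
    have hc : (((k - 1 : ℕ) : ℚ)) * (𝓑.countP (fun b => x ∈ b) : ℚ) ≤ (l : ℚ) * ((v - 1 : ℕ) : ℚ) := by
      exact_mod_cast this
    rw [Nat.cast_sub (by omega : 1 ≤ k), Nat.cast_sub (by omega : 1 ≤ v)] at hc
    push_cast at hc
    push_cast
    linarith
  -- step 3: k * |𝓑| ≤ v * r
  have step3 : (k : ℤ) * Multiset.card 𝓑 ≤ (v : ℤ) * r := by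
    have h := count_total 𝓑 hblocks
    have h' : ((k * Multiset.card 𝓑 : ℕ) : ℤ) = ∑ x : Fin v, (𝓑.countP (fun b => x ∈ b) : ℤ) := by
      rw [← h]; push_cast; ring
    calc (k : ℤ) * Multiset.card 𝓑 = ∑ x : Fin v, (𝓑.countP (fun b => x ∈ b) : ℤ) := by
          rw [← h']; push_cast; ring
      _ ≤ ∑ _x : Fin v, r := Finset.sum_le_sum (fun x _ => step2 x)
      _ = (v : ℤ) * r := by simp [mul_comm]
  -- conclude
  rw [Int.le_floor]
  have hkQ : (0 : ℚ) < (k : ℚ) := by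
    have : (2:ℚ) ≤ (k:ℚ) := by exact_mod_cast hk
    linarith
  rw [le_div_iff₀ hkQ]
  have := step3
  have hc : ((Multiset.card 𝓑 : ℤ) : ℚ) * (k : ℚ) ≤ ((v : ℤ) : ℚ) * ((r : ℤ) : ℚ) := by
    exact_mod_cast (by linarith : (Multiset.card 𝓑 : ℤ) * (k : ℤ) ≤ (v : ℤ) * r)
  push_cast at hc ⊢
  linarith
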